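/- Leave-one-out stability of bias-corrected kernel ridge regression: ‖f̂₍ᵢ₎^♯ − ĝ^♯‖_K ≤ (κ/(Nλ))( |ĝ(xᵢ) − yᵢ| + |ĝ^♯(xᵢ) − yᵢ| ) for all 1 ≤ i ≤ N+1. -/

import Mathlib

lemma first_order {H : Type*} [NormedAddCommGroup H] [InnerProductSpace ℝ H]
    {ι : Type*} (S : Finset ι) (Kx : ι → H) (y : ι → ℝ)
    (a lam : ℝ) (ha : 0 ≤ a) (hlam : 0 ≤ lam) (c u : H)
    (hmin : ∀ f : H,
      a * ∑ j ∈ S, ((inner ℝ u (Kx j) : ℝ) - y j) ^ 2 + lam * ‖u - c‖ ^ 2 ≤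
        a * ∑ j ∈ S, ((inner ℝ f (Kx j) : ℝ) - y j) ^ 2 + lam * ‖f - c‖ ^ 2)
    (h : H) :
    a * ∑ j ∈ S, ((inner ℝ u (Kx j) : ℝ) - y j) * (inner ℝ h (Kx j) : ℝ)
      + lam * (inner ℝ (u - c) h : ℝ) = 0 := by
  set L : ℝ := a * ∑ j ∈ S, ((inner ℝ u (Kx j) : ℝ) - y j) * (inner ℝ h (Kx j) : ℝ)
      + lam * (inner ℝ (u - c) h : ℝ) with hL
  set Q : ℝ := a * ∑ j ∈ S, (inner ℝ h (Kx j) : ℝ) ^ 2 + lam * ‖h‖ ^ 2 with hQdef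
  have hQ : 0 ≤ Q := by
    apply add_nonneg
    · exact mul_nonneg ha (Finset.sum_nonneg fun j _ => sq_nonneg _)
    · positivity
  have key : ∀ t : ℝ, 0 ≤ 2 * t * L + t ^ 2 * Q := by
    intro t
    have hm := hmin (u + t • h)
    have hnorm : ‖(u + t • h) - c‖ ^ 2
        = ‖u - c‖ ^ 2 + 2 * t * (inner ℝ (u - c) h : ℝ) + t ^ 2 * ‖h‖ ^ 2 := by
      have h1 : (u + t • h) - c = (u - c) + t • h := by abel
      rw [h1, norm_add_sq_real, real_inner_smul_right, norm_smul]
      simp [mul_pow]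
      ring
    have hsum : ∑ j ∈ S, ((inner ℝ (u + t • h) (Kx j) : ℝ) - y j) ^ 2
        = ∑ j ∈ S, (((inner ℝ u (Kx j) : ℝ) - y j) ^ 2
            + 2 * t * (((inner ℝ u (Kx j) : ℝ) - y j) * (inner ℝ h (Kx j) : ℝ))
            + t ^ 2 * (inner ℝ h (Kx j) : ℝ) ^ 2) := by
      refine Finset.sum_congr rfl fun j _ => ?_
      rw [inner_add_left, real_inner_smul_left]
      ring
    rw [hsum, hnorm] at hm
    simp only [Finset.sum_add_distrib, ← Finset.mul_sum] at hm
    rw [hL, hQdef]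
    nlinarith [hm]
  have hQ1 : (0:ℝ) < Q + 1 := by linarith
  have h1 := key (-L / (Q + 1))
  have e : 2 * (-L / (Q + 1)) * L + (-L / (Q + 1)) ^ 2 * Q
      = (-(L ^ 2) * (Q + 2)) / (Q + 1) ^ 2 := by
    field_simp
    ring
  rw [e] at h1
  have h2 : 0 ≤ -(L ^ 2) * (Q + 2) := by
    have := mul_nonneg h1 (sq_nonneg (Q + 1))
    rwa [div_mul_cancel₀ _ (by positivity : ((Q:ℝ) + 1) ^ 2 ≠ 0)] at this
  have hsq : L ^ 2 = 0 := le_antisymm (by nlinarith) (sq_nonneg L)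
  exact pow_eq_zero_iff (by norm_num) |>.mp hsq

/-- Leave-one-out stability of bias-corrected KRR: with `ĝ`, `f̂₍ᵢ₎` the full-sample and
leave-one-out KRR estimators and `ĝ♯`, `f̂₍ᵢ₎♯` the corresponding bias-corrected
(recentered) estimators, one has
`‖f̂₍ᵢ₎♯ − ĝ♯‖_K ≤ (κ/(Nλ))(|ĝ(xᵢ) − yᵢ| + |ĝ♯(xᵢ) − yᵢ|)`.  The RKHS is modeled by a
Hilbert space `H` with feature vectors `Kx j`, so `f(x_j) = ⟪f, Kx j⟫` and `‖Kx j‖ ≤ κ`. -/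
theorem stmt_10 {H : Type*} [NormedAddCommGroup H] [InnerProductSpace ℝ H]
    (N : ℕ) (hN : 0 < N)
    (Kx : Fin (N + 1) → H) (y : Fin (N + 1) → ℝ)
    (κ : ℝ) (hκ : ∀ j, ‖Kx j‖ ≤ κ)
    (lam : ℝ) (hlam : 0 < lam)
    (i : Fin (N + 1)) (ghat fi gsharp fisharp : H)
    (hghat : ∀ f : H,
      (1 / N : ℝ) * ∑ j, ((inner ℝ ghat (Kx j) : ℝ) - y j) ^ 2 + lam * ‖ghat‖ ^ 2 ≤
        (1 / N : ℝ) * ∑ j, ((inner ℝ f (Kx j) : ℝ) - y j) ^ 2 + lam * ‖f‖ ^ 2)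
    (hfi : ∀ f : H,
      (1 / N : ℝ) * ∑ j ∈ Finset.univ.erase i, ((inner ℝ fi (Kx j) : ℝ) - y j) ^ 2
          + lam * ‖fi‖ ^ 2 ≤
        (1 / N : ℝ) * ∑ j ∈ Finset.univ.erase i, ((inner ℝ f (Kx j) : ℝ) - y j) ^ 2
          + lam * ‖f‖ ^ 2)
    (hgsharp : ∀ f : H,
      (1 / N : ℝ) * ∑ j, ((inner ℝ gsharp (Kx j) : ℝ) - y j) ^ 2 + lam * ‖gsharp - ghat‖ ^ 2 ≤
        (1 / N : ℝ) * ∑ j, ((inner ℝ f (Kx j) : ℝ) - y j) ^ 2 + lam * ‖f - ghat‖ ^ 2)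
    (hfisharp : ∀ f : H,
      (1 / N : ℝ) * ∑ j ∈ Finset.univ.erase i, ((inner ℝ fisharp (Kx j) : ℝ) - y j) ^ 2
          + lam * ‖fisharp - fi‖ ^ 2 ≤
        (1 / N : ℝ) * ∑ j ∈ Finset.univ.erase i, ((inner ℝ f (Kx j) : ℝ) - y j) ^ 2
          + lam * ‖f - fi‖ ^ 2) :
    ‖fisharp - gsharp‖ ≤
      κ / (N * lam) *
        (|(inner ℝ ghat (Kx i) : ℝ) - y i| + |(inner ℝ gsharp (Kx i) : ℝ) - y i|) := by
  have hNpos : (0:ℝ) < N := by exact_mod_cast hN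
  set a : ℝ := 1 / N with ha_def
  have ha : 0 ≤ a := by positivity
  have hlam' : 0 ≤ lam := hlam.le
  have hκ0 : 0 ≤ κ := le_trans (norm_nonneg (Kx i)) (hκ i)
  set e : H := fi - ghat with he
  set d : H := fisharp - gsharp with hd
  set r : ℝ := (inner ℝ ghat (Kx i) : ℝ) - y i with hr
  set s : ℝ := (inner ℝ gsharp (Kx i) : ℝ) - y i with hs
  clear_value a e d r s
  have E1 := first_order Finset.univ Kx y a lam ha hlam' 0 ghat (by simpa using hghat)
  have E2 := first_order (Finset.univ.erase i) Kx y a lam ha hlam' 0 fi (by simpa using hfi)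
  have E3 := first_order Finset.univ Kx y a lam ha hlam' ghat gsharp hgsharp
  have E4 := first_order (Finset.univ.erase i) Kx y a lam ha hlam' fi fisharp hfisharp
  -- split full sums
  have split : ∀ (g : Fin (N+1) → ℝ),
      ∑ j, g j = ∑ j ∈ Finset.univ.erase i, g j + g i := fun g =>
    (Finset.sum_erase_add _ _ (Finset.mem_univ i)).symm
  -- key identity 1:  a * Σ_{j≠i} ⟪e,Kxj⟫² + lam‖e‖² = a * r * ⟪e,Kxi⟫
  have key1 : a * ∑ j ∈ Finset.univ.erase i, (inner ℝ e (Kx j) : ℝ) ^ 2 + lam * ‖e‖ ^ 2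
      = a * (r * (inner ℝ e (Kx i) : ℝ)) := by
    have h1 := E1 e
    rw [split (fun j => ((inner ℝ ghat (Kx j) : ℝ) - y j) * (inner ℝ e (Kx j) : ℝ))] at h1
    have h2 := E2 e
    have hsum_e : ∑ j ∈ Finset.univ.erase i, ((inner ℝ fi (Kx j) : ℝ) - y j) * (inner ℝ e (Kx j) : ℝ)
        - ∑ j ∈ Finset.univ.erase i, ((inner ℝ ghat (Kx j) : ℝ) - y j) * (inner ℝ e (Kx j) : ℝ)
        = ∑ j ∈ Finset.univ.erase i, (inner ℝ e (Kx j) : ℝ) ^ 2 := by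
      rw [← Finset.sum_sub_distrib]
      refine Finset.sum_congr rfl fun j _ => ?_
      have : (inner ℝ e (Kx j) : ℝ) = (inner ℝ fi (Kx j) : ℝ) - (inner ℝ ghat (Kx j) : ℝ) := by
        rw [he, inner_sub_left]
      rw [this]; ring
    have hinner_e : (inner ℝ (fi - (0:H)) e : ℝ) - (inner ℝ (ghat - (0:H)) e : ℝ) = ‖e‖ ^ 2 := by
      rw [sub_zero, sub_zero, ← inner_sub_left, ← he, real_inner_self_eq_norm_sq]
    linear_combination h2 - h1 - a * hsum_e - lam * hinner_e - a * (inner ℝ e (Kx i) : ℝ) * hr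
  -- key identity 2:  a * Σ_{j≠i} ⟪d,Kxj⟫² + lam‖d‖² = a*s*⟪d,Kxi⟫ + lam⟪e,d⟫
  have key2 : a * ∑ j ∈ Finset.univ.erase i, (inner ℝ d (Kx j) : ℝ) ^ 2 + lam * ‖d‖ ^ 2
      = a * (s * (inner ℝ d (Kx i) : ℝ)) + lam * (inner ℝ e d : ℝ) := by
    have h3 := E3 d
    rw [split (fun j => ((inner ℝ gsharp (Kx j) : ℝ) - y j) * (inner ℝ d (Kx j) : ℝ))] at h3
    have h4 := E4 d
    have hsum_d : ∑ j ∈ Finset.univ.erase i,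
          ((inner ℝ fisharp (Kx j) : ℝ) - y j) * (inner ℝ d (Kx j) : ℝ)
        - ∑ j ∈ Finset.univ.erase i,
          ((inner ℝ gsharp (Kx j) : ℝ) - y j) * (inner ℝ d (Kx j) : ℝ)
        = ∑ j ∈ Finset.univ.erase i, (inner ℝ d (Kx j) : ℝ) ^ 2 := by
      rw [← Finset.sum_sub_distrib]
      refine Finset.sum_congr rfl fun j _ => ?_
      have : (inner ℝ d (Kx j) : ℝ) = (inner ℝ fisharp (Kx j) : ℝ) - (inner ℝ gsharp (Kx j) : ℝ) := by
        rw [hd, inner_sub_left]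
      rw [this]; ring
    have hinner_d : (inner ℝ (fisharp - fi) d : ℝ) - (inner ℝ (gsharp - ghat) d : ℝ)
        = ‖d‖ ^ 2 - (inner ℝ e d : ℝ) := by
      rw [← inner_sub_left]
      have hde : fisharp - fi - (gsharp - ghat) = d - e := by rw [hd, he]; abel
      rw [hde, inner_sub_left, real_inner_self_eq_norm_sq]
    linear_combination h4 - h3 - a * hsum_d - lam * hinner_d - a * (inner ℝ d (Kx i) : ℝ) * hs
  -- Cauchy-Schwarz helper
  have CS : ∀ (h : H) (t : ℝ), t * (inner ℝ h (Kx i) : ℝ) ≤ |t| * (κ * ‖h‖) := by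
    intro h t
    have h1 := abs_real_inner_le_norm h (Kx i)
    have h2 : t * (inner ℝ h (Kx i) : ℝ) ≤ |t| * |(inner ℝ h (Kx i) : ℝ)| := by
      rw [← abs_mul]; exact le_abs_self _
    have h3 : |t| * |(inner ℝ h (Kx i) : ℝ)| ≤ |t| * (‖h‖ * ‖Kx i‖) :=
      mul_le_mul_of_nonneg_left h1 (abs_nonneg t)
    have h4 : |t| * (‖h‖ * ‖Kx i‖) ≤ |t| * (κ * ‖h‖) := by
      refine mul_le_mul_of_nonneg_left ?_ (abs_nonneg t)
      rw [mul_comm κ ‖h‖]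
      exact mul_le_mul_of_nonneg_left (hκ i) (norm_nonneg h)
    linarith
  have sumnn : ∀ h : H, 0 ≤ a * ∑ j ∈ Finset.univ.erase i, (inner ℝ h (Kx j) : ℝ) ^ 2 :=
    fun h => mul_nonneg ha (Finset.sum_nonneg fun j _ => sq_nonneg _)
  -- step 1 : lam * ‖e‖ ≤ a * (κ * |r|)
  have step1 : lam * ‖e‖ ≤ a * (κ * |r|) := by
    have hb : lam * ‖e‖ ^ 2 ≤ a * (|r| * (κ * ‖e‖)) := by
      have h5 : a * (r * (inner ℝ e (Kx i) : ℝ)) ≤ a * (|r| * (κ * ‖e‖)) :=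
        mul_le_mul_of_nonneg_left (CS e r) ha
      linarith [sumnn e, key1]
    rcases (norm_nonneg e).eq_or_lt with hz | hz
    · rw [← hz, mul_zero]; positivity
    · have h6 : (lam * ‖e‖) * ‖e‖ ≤ (a * (κ * |r|)) * ‖e‖ := by
        calc (lam * ‖e‖) * ‖e‖ = lam * ‖e‖ ^ 2 := by ring
          _ ≤ a * (|r| * (κ * ‖e‖)) := hb
          _ = (a * (κ * |r|)) * ‖e‖ := by ring
      exact le_of_mul_le_mul_right h6 hz
  -- step 2 : lam * ‖d‖ ≤ a * (κ * |s|) + lam * ‖e‖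
  have step2 : lam * ‖d‖ ≤ a * (κ * |s|) + lam * ‖e‖ := by
    have hb : lam * ‖d‖ ^ 2 ≤ a * (|s| * (κ * ‖d‖)) + lam * (‖e‖ * ‖d‖) := by
      have h5 : a * (s * (inner ℝ d (Kx i) : ℝ)) ≤ a * (|s| * (κ * ‖d‖)) :=
        mul_le_mul_of_nonneg_left (CS d s) ha
      have h6 : lam * (inner ℝ e d : ℝ) ≤ lam * (‖e‖ * ‖d‖) :=
        mul_le_mul_of_nonneg_left (real_inner_le_norm e d) hlam'
      linarith [sumnn d, key2]
    rcases (norm_nonneg d).eq_or_lt with hz | hz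
    · rw [← hz, mul_zero]
      have h7 : 0 ≤ lam * ‖e‖ := mul_nonneg hlam' (norm_nonneg e)
      have h8 : 0 ≤ a * (κ * |s|) := by positivity
      linarith
    · have h6 : (lam * ‖d‖) * ‖d‖ ≤ (a * (κ * |s|) + lam * ‖e‖) * ‖d‖ := by
        calc (lam * ‖d‖) * ‖d‖ = lam * ‖d‖ ^ 2 := by ring
          _ ≤ a * (|s| * (κ * ‖d‖)) + lam * (‖e‖ * ‖d‖) := hb
          _ = (a * (κ * |s|) + lam * ‖e‖) * ‖d‖ := by ring
      exact le_of_mul_le_mul_right h6 hz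
  -- conclude
  have hrhs : κ / (↑N * lam) * (|r| + |s|) = a * (κ * (|r| + |s|)) / lam := by
    rw [ha_def]
    field_simp
  rw [hrhs, le_div_iff₀ hlam]
  have hfin : a * (κ * |s|) + a * (κ * |r|) = a * (κ * (|r| + |s|)) := by ring
  linarith [step1, step2]
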